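/- Define M₀(p) = ( θ₃(πp, e^{-α/8}) / (2 θ₃(2πp, e^{-α/2})) + η cos(2πp) )^{1/2} where η = 1 - θ₃(0, e^{-α/8})/(2 θ₃(0, e^{-α/2})) and α > 0. Then M₀ satisfies the exact quadrature mirror filter condition M₀²(p) + M₀²(p + 1/2) = 1 for all real p. -/

import Mathlib

open Real

/-- Jacobi theta function θ₃(z, e^{-γ}) for real z: Σ_{n∈ℤ} e^{-γ n²} cos(2nz). -/
noncomputable def theta3R (z γ : ℝ) : ℝ :=
  ∑' n : ℤ, Real.exp (-γ * (n : ℝ)^2) * Real.cos (2 * (n : ℝ) * z)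

namespace ThetaQMF

/-- The "odd" theta series. -/
noncomputable def Oth (γ w : ℝ) : ℝ :=
  ∑' j : ℤ, Real.exp (-(γ/2) * (2*(j:ℝ)+1)^2) * Real.cos ((2*(j:ℝ)+1)*w)

lemma summable_gauss_nat {c : ℝ} (hc : 0 < c) (r : ℝ) :
    Summable fun n : ℕ => Real.exp (-c * ((n : ℝ) + r)^2) := by
  have hgeo : Summable fun n : ℕ => Real.exp (c * r^2) * Real.exp (-(c/2)) ^ n :=
    (summable_geometric_of_lt_one (Real.exp_nonneg _)
      (Real.exp_lt_one_iff.2 (by linarith))).mul_left _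
  refine Summable.of_nonneg_of_le (fun n => (Real.exp_pos _).le) (fun n => ?_) hgeo
  rw [← Real.exp_nat_mul, ← Real.exp_add]
  apply Real.exp_le_exp.2
  have h2 : (n : ℝ) ≤ (n:ℝ)^2 := by exact_mod_cast Nat.le_self_pow two_ne_zero n
  nlinarith [mul_nonneg hc.le (sq_nonneg ((n:ℝ) + 2*r)), mul_nonneg hc.le (sub_nonneg.2 h2)]

lemma summable_gauss {c : ℝ} (hc : 0 < c) (r : ℝ) :
    Summable fun n : ℤ => Real.exp (-c * ((n : ℝ) + r)^2) := by
  apply Summable.of_nat_of_neg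
  · exact (summable_gauss_nat hc r).congr (fun n => by norm_num)
  · refine ((summable_gauss_nat hc (-r)).congr (fun n => ?_))
    push_cast
    congr 1
    ring

lemma summable_of_le_gauss {c : ℝ} (hc : 0 < c) (r : ℝ) {f : ℤ → ℝ}
    (h : ∀ n : ℤ, |f n| ≤ Real.exp (-c * ((n:ℝ) + r)^2)) : Summable f :=
  Summable.of_norm_bounded (summable_gauss hc r) (by simpa [Real.norm_eq_abs] using h)

lemma summable_gauss0 {c : ℝ} (hc : 0 < c) :
    Summable fun n : ℤ => Real.exp (-c * (n : ℝ)^2) :=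
  (summable_gauss hc 0).congr (fun n => by norm_num)

lemma abs_theta_term_le (c : ℝ) (a : ℝ) (x : ℝ) :
    |Real.exp (-c * a^2) * Real.cos x| ≤ Real.exp (-c * a^2) := by
  rw [abs_mul, abs_of_pos (Real.exp_pos _)]
  calc Real.exp (-c * a^2) * |Real.cos x| ≤ Real.exp (-c * a^2) * 1 :=
        mul_le_mul_of_nonneg_left (Real.abs_cos_le_one x) (Real.exp_pos _).le
    _ = _ := mul_one _

lemma summable_theta_term {γ : ℝ} (hγ : 0 < γ) (z : ℝ) :
    Summable fun n : ℤ => Real.exp (-γ * (n : ℝ)^2) * Real.cos (2 * (n:ℝ) * z) := by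
  refine summable_of_le_gauss hγ 0 (fun n => ?_)
  have := abs_theta_term_le γ (n:ℝ) (2 * (n:ℝ) * z)
  calc |Real.exp (-γ * (n:ℝ)^2) * Real.cos (2 * (n:ℝ) * z)| ≤ Real.exp (-γ * (n:ℝ)^2) := this
    _ = Real.exp (-γ * ((n:ℝ) + 0)^2) := by norm_num

/-- Key generic lemma: product of two cosine series. -/
lemma prod_expand (a : ℤ → ℝ) (φ : ℤ → ℝ) (σ : Equiv.Perm ℤ)
    (hσa : ∀ k, a (σ k) = a k) (hσφ : ∀ k, φ (σ k) = -φ k)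
    (ha : Summable fun n => |a n|) (u v : ℝ) :
    (∑' n : ℤ, a n * Real.cos (φ n * u)) * (∑' n : ℤ, a n * Real.cos (φ n * v)) =
      ∑' q : ℤ × ℤ, a q.1 * a q.2 * Real.cos (φ q.1 * u + φ q.2 * v) := by
  have habs : Summable fun q : ℤ × ℤ => |a q.1| * |a q.2| :=
    ha.mul_of_nonneg ha (fun _ => abs_nonneg _) (fun _ => abs_nonneg _)
  set g : ℤ × ℤ → ℝ := fun q => a q.1 * a q.2 * Real.cos (φ q.1 * u + φ q.2 * v) / 2 with hg
  set h : ℤ × ℤ → ℝ := fun q => a q.1 * a q.2 * Real.cos (φ q.1 * u - φ q.2 * v) / 2 with hh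
  have hbound : ∀ (w : ℝ) (q : ℤ × ℤ), |a q.1 * a q.2 * Real.cos w / 2| ≤ |a q.1| * |a q.2| := by
    intro w q
    rw [abs_div, abs_mul, abs_mul, abs_two]
    have h0 : 0 ≤ |a q.1| * |a q.2| := mul_nonneg (abs_nonneg _) (abs_nonneg _)
    have h1 : |Real.cos w| ≤ 1 := Real.abs_cos_le_one w
    have h2 : 0 ≤ |Real.cos w| := abs_nonneg _
    rw [div_le_iff₀ (by norm_num : (0:ℝ) < 2)]
    nlinarith
  have Sg : Summable g :=
    Summable.of_norm_bounded habs (fun q => by simpa [Real.norm_eq_abs] using hbound _ q)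
  have Sh : Summable h :=
    Summable.of_norm_bounded habs (fun q => by simpa [Real.norm_eq_abs] using hbound _ q)
  have h1 : Summable fun n => ‖a n * Real.cos (φ n * u)‖ := by
    refine Summable.of_nonneg_of_le (fun n => norm_nonneg _) (fun n => ?_) ha
    rw [Real.norm_eq_abs, abs_mul]
    calc |a n| * |Real.cos (φ n * u)| ≤ |a n| * 1 :=
          mul_le_mul_of_nonneg_left (Real.abs_cos_le_one _) (abs_nonneg _)
      _ = |a n| := mul_one _
  have h2 : Summable fun n => ‖a n * Real.cos (φ n * v)‖ := by
    refine Summable.of_nonneg_of_le (fun n => norm_nonneg _) (fun n => ?_) ha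
    rw [Real.norm_eq_abs, abs_mul]
    calc |a n| * |Real.cos (φ n * v)| ≤ |a n| * 1 :=
          mul_le_mul_of_nonneg_left (Real.abs_cos_le_one _) (abs_nonneg _)
      _ = |a n| := mul_one _
  rw [tsum_mul_tsum_of_summable_norm h1 h2]
  have key : ∀ q : ℤ × ℤ,
      a q.1 * Real.cos (φ q.1 * u) * (a q.2 * Real.cos (φ q.2 * v)) = g q + h q := by
    intro q
    simp only [hg, hh]
    rw [Real.cos_add, Real.cos_sub]
    ring
  rw [tsum_congr key, Summable.tsum_add Sg Sh]
  have hpt : ∀ q : ℤ × ℤ, h q = g (((Equiv.refl ℤ).prodCongr σ) q) := by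
    intro q
    show a q.1 * a q.2 * Real.cos (φ q.1 * u - φ q.2 * v) / 2
        = a q.1 * a (σ q.2) * Real.cos (φ q.1 * u + φ (σ q.2) * v) / 2
    rw [hσa, hσφ]
    congr 2
    ring
  have hhg : ∑' q : ℤ × ℤ, h q = ∑' q : ℤ × ℤ, g q := by
    rw [tsum_congr hpt, Equiv.tsum_eq ((Equiv.refl ℤ).prodCongr σ) g]
  rw [hhg, ← Summable.tsum_add Sg Sg]
  apply tsum_congr
  intro q
  simp only [hg]
  ring

/-- The even-parity sublattice. -/
def sEv : Set (ℤ × ℤ) := {q : ℤ × ℤ | (q.1 + q.2) % 2 = 0}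

def eEven : (ℤ × ℤ) ≃ sEv where
  toFun jk := ⟨(jk.1 + jk.2, jk.1 - jk.2), by simp only [sEv, Set.mem_setOf_eq]; omega⟩
  invFun q := ((q.1.1 + q.1.2)/2, (q.1.1 - q.1.2)/2)
  left_inv jk := by
    obtain ⟨j, k⟩ := jk
    simp only [Prod.mk.injEq]
    omega
  right_inv q := by
    obtain ⟨⟨m, n⟩, hq⟩ := q
    simp only [sEv, Set.mem_setOf_eq] at hq
    apply Subtype.ext
    simp only [Prod.mk.injEq]
    omega

def eOdd : (ℤ × ℤ) ≃ ↥(sEvᶜ) where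
  toFun jk := ⟨(jk.1 + jk.2 + 1, jk.1 - jk.2), by
    simp only [sEv, Set.mem_compl_iff, Set.mem_setOf_eq]; omega⟩
  invFun q := ((q.1.1 + q.1.2 - 1)/2, (q.1.1 - q.1.2 - 1)/2)
  left_inv jk := by
    obtain ⟨j, k⟩ := jk
    simp only [Prod.mk.injEq]
    omega
  right_inv q := by
    obtain ⟨⟨m, n⟩, hq⟩ := q
    simp only [sEv, Set.mem_compl_iff, Set.mem_setOf_eq] at hq
    apply Subtype.ext
    simp only [Prod.mk.injEq]
    omega

/-- The fundamental product identity. -/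
lemma theta_mul {γ : ℝ} (hγ : 0 < γ) (x y : ℝ) :
    theta3R x γ * theta3R y γ =
      theta3R (x+y) (2*γ) * theta3R (x-y) (2*γ) + Oth γ (x+y) * Oth γ (x-y) := by
  set F : ℤ × ℤ → ℝ := fun q =>
    Real.exp (-γ * ((q.1:ℝ)^2 + (q.2:ℝ)^2)) * Real.cos (2*(q.1:ℝ)*x + 2*(q.2:ℝ)*y) with hF
  have hFs : Summable F := by
    refine Summable.of_norm_bounded
      ((summable_gauss0 hγ).mul_of_nonneg (summable_gauss0 hγ)
        (fun _ => (Real.exp_pos _).le) (fun _ => (Real.exp_pos _).le)) (fun q => ?_)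
    rw [Real.norm_eq_abs, ← Real.exp_add]
    have he : -γ * (q.1:ℝ)^2 + -γ * (q.2:ℝ)^2 = -γ * ((q.1:ℝ)^2 + (q.2:ℝ)^2) := by ring
    rw [he]
    have h1 : |F q| ≤ Real.exp (-γ * ((q.1:ℝ)^2 + (q.2:ℝ)^2)) := by
      have h2 := abs_theta_term_le γ (Real.sqrt ((q.1:ℝ)^2 + (q.2:ℝ)^2))
        (2*(q.1:ℝ)*x + 2*(q.2:ℝ)*y)
      rw [Real.sq_sqrt (by positivity)] at h2
      exact h2
    exact h1
  have haθ : Summable fun n : ℤ => |Real.exp (-γ * (n:ℝ)^2)| := by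
    refine (summable_gauss0 hγ).congr (fun n => ?_)
    rw [abs_of_pos (Real.exp_pos _)]
  have haE : Summable fun n : ℤ => |Real.exp (-(2*γ) * (n:ℝ)^2)| := by
    refine (summable_gauss0 (by linarith : (0:ℝ) < 2*γ)).congr (fun n => ?_)
    rw [abs_of_pos (Real.exp_pos _)]
  have haO : Summable fun n : ℤ => |Real.exp (-(γ/2) * (2*(n:ℝ)+1)^2)| := by
    refine (summable_gauss (by linarith : (0:ℝ) < 2*γ) (1/2)).congr (fun n => ?_)
    rw [abs_of_pos (Real.exp_pos _)]
    congr 1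
    ring
  -- Step 1 : θθ = full lattice sum
  have step1 : theta3R x γ * theta3R y γ = ∑' q : ℤ × ℤ, F q := by
    have hpe := prod_expand (fun n => Real.exp (-γ * (n:ℝ)^2)) (fun n => 2*(n:ℝ))
      (Equiv.neg ℤ) (fun k => by simp only [Equiv.neg_apply]; push_cast; ring_nf)
      (fun k => by show 2*((-k : ℤ):ℝ) = -(2*(k:ℝ)); push_cast; ring) haθ x y
    rw [theta3R, theta3R, hpe]
    apply tsum_congr
    intro q
    show Real.exp (-γ * (q.1:ℝ)^2) * Real.exp (-γ * (q.2:ℝ)^2) * Real.cos _ = F q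
    rw [hF, ← Real.exp_add]
    congr 2
    ring
  -- Step 2 : even part
  have step2 : theta3R (x+y) (2*γ) * theta3R (x-y) (2*γ) = ∑' q : sEv, F q := by
    have hpe := prod_expand (fun n => Real.exp (-(2*γ) * (n:ℝ)^2)) (fun n => 2*(n:ℝ))
      (Equiv.neg ℤ) (fun k => by simp only [Equiv.neg_apply]; push_cast; ring_nf)
      (fun k => by show 2*((-k : ℤ):ℝ) = -(2*(k:ℝ)); push_cast; ring) haE (x+y) (x-y)
    have heq := Equiv.tsum_eq eEven (fun q : sEv => F q.1)
    rw [theta3R, theta3R, hpe, ← heq]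
    apply tsum_congr
    intro q
    obtain ⟨j, k⟩ := q
    show Real.exp (-(2*γ) * (j:ℝ)^2) * Real.exp (-(2*γ) * (k:ℝ)^2) * Real.cos _
        = F ((j + k, j - k) : ℤ × ℤ)
    rw [hF, ← Real.exp_add]
    show _ = Real.exp (-γ * (((j+k : ℤ):ℝ)^2 + ((j-k : ℤ):ℝ)^2)) * Real.cos
      (2*((j+k : ℤ):ℝ)*x + 2*((j-k : ℤ):ℝ)*y)
    push_cast
    congr 2
    · ring
    · ring
  -- Step 3 : odd part
  have step3 : Oth γ (x+y) * Oth γ (x-y) = ∑' q : ↥(sEvᶜ), F q := by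
    have σinv : Function.Involutive (fun k : ℤ => -(k+1)) := fun k => by ring
    have hpe := prod_expand (fun n => Real.exp (-(γ/2) * (2*(n:ℝ)+1)^2))
      (fun n => 2*(n:ℝ)+1) σinv.toPerm
      (fun k => by
        show Real.exp (-(γ/2) * (2*((-(k+1) : ℤ):ℝ)+1)^2) = _
        push_cast
        congr 1
        ring)
      (fun k => by
        show 2*((-(k+1) : ℤ):ℝ)+1 = -(2*(k:ℝ)+1)
        push_cast
        ring) haO (x+y) (x-y)
    have heq := Equiv.tsum_eq eOdd (fun q : ↥(sEvᶜ) => F q.1)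
    rw [Oth, Oth, hpe, ← heq]
    apply tsum_congr
    intro q
    obtain ⟨j, k⟩ := q
    show Real.exp (-(γ/2) * (2*(j:ℝ)+1)^2) * Real.exp (-(γ/2) * (2*(k:ℝ)+1)^2) * Real.cos _
        = F ((j + k + 1, j - k) : ℤ × ℤ)
    rw [hF, ← Real.exp_add]
    show _ = Real.exp (-γ * (((j+k+1 : ℤ):ℝ)^2 + ((j-k : ℤ):ℝ)^2)) * Real.cos
      (2*((j+k+1 : ℤ):ℝ)*x + 2*((j-k : ℤ):ℝ)*y)
    push_cast
    congr 2
    · ring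
    · ring
  rw [step1, step2, step3, Summable.tsum_add_tsum_compl (hFs.subtype _) (hFs.subtype _)]

/-- Periodicity of theta3R with period π. -/
lemma theta3R_pi (z γ : ℝ) : theta3R (z + π) γ = theta3R z γ := by
  apply tsum_congr
  intro n
  rw [show 2 * (n:ℝ) * (z + π) = 2 * (n:ℝ) * z + (n:ℤ) * (2 * π) by push_cast; ring,
    Real.cos_add_int_mul_two_pi]

/-- Oth is anti-periodic with period π. -/
lemma Oth_pi (γ w : ℝ) : Oth γ (w + π) = -Oth γ w := by
  rw [Oth, Oth, ← tsum_neg]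
  apply tsum_congr
  intro j
  rw [show (2*(j:ℝ)+1) * (w + π) = (2*(j:ℝ)+1) * w + ((2*j+1 : ℤ):ℝ) * π by push_cast; ring,
    Real.cos_add_int_mul_pi, Odd.neg_one_zpow ⟨j, by ring⟩]
  ring

/-- Half-period identity. -/
lemma theta3R_half {γ : ℝ} (hγ : 0 < γ) (z : ℝ) :
    theta3R z γ + theta3R (z + π/2) γ = 2 * theta3R (2*z) (4*γ) := by
  rw [theta3R, theta3R, ← Summable.tsum_add (summable_theta_term hγ z) (summable_theta_term hγ (z + π/2))]
  rw [theta3R, ← tsum_mul_left]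
  symm
  have hinj : Function.Injective (fun m : ℤ => 2 * m) := by
    intro a b h
    have h' : 2 * a = 2 * b := h
    omega
  have hsupp : Function.support (fun n : ℤ =>
      Real.exp (-γ * (n:ℝ)^2) * Real.cos (2 * (n:ℝ) * z) +
      Real.exp (-γ * (n:ℝ)^2) * Real.cos (2 * (n:ℝ) * (z + π/2)))
      ⊆ Set.range (fun m : ℤ => 2 * m) := by
    intro n hn
    by_contra hr
    apply hn
    have hodd : Odd n := by
      rcases Int.even_or_odd n with he | ho
      · exfalso
        apply hr
        obtain ⟨r, hr'⟩ := he
        exact ⟨r, by show 2 * r = n; omega⟩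
      · exact ho
    show Real.exp (-γ * (n:ℝ)^2) * Real.cos (2 * (n:ℝ) * z) +
      Real.exp (-γ * (n:ℝ)^2) * Real.cos (2 * (n:ℝ) * (z + π/2)) = 0
    have harg : 2 * (n:ℝ) * (z + π/2) = 2 * (n:ℝ) * z + (n:ℤ) * π := by push_cast; ring
    rw [harg, Real.cos_add_int_mul_pi, Odd.neg_one_zpow hodd]
    ring
  rw [← Function.Injective.tsum_eq hinj hsupp]
  apply tsum_congr
  intro m
  show 2 * (Real.exp (-(4*γ) * (m:ℝ)^2) * Real.cos (2 * (m:ℝ) * (2*z)))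
      = Real.exp (-γ * ((2*m : ℤ):ℝ)^2) * Real.cos (2 * ((2*m : ℤ):ℝ) * z) +
        Real.exp (-γ * ((2*m : ℤ):ℝ)^2) * Real.cos (2 * ((2*m : ℤ):ℝ) * (z + π/2))
  have h1 : 2 * ((2*m : ℤ):ℝ) * (z + π/2) = 2 * ((2*m : ℤ):ℝ) * z + (m:ℤ) * (2 * π) := by
    push_cast; ring
  rw [h1, Real.cos_add_int_mul_two_pi]
  have e1 : -γ * ((2*m : ℤ):ℝ)^2 = -(4*γ) * (m:ℝ)^2 := by push_cast; ring
  have e2 : 2 * ((2*m : ℤ):ℝ) * z = 2 * (m:ℝ) * (2*z) := by push_cast; ring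
  rw [e1, e2]
  ring

/-- θ₃(0,γ) > 0 : all terms are positive. -/
lemma theta3R_zero_pos {γ : ℝ} (hγ : 0 < γ) : 0 < theta3R 0 γ := by
  refine Summable.tsum_pos (summable_theta_term hγ 0) (fun n => ?_) 0 ?_
  · simp only [mul_zero, Real.cos_zero, mul_one]
    exact (Real.exp_pos _).le
  · simp only [Int.cast_zero, mul_zero, zero_mul, Real.cos_zero, mul_one, zero_pow, ne_eq,
      OfNat.ofNat_ne_zero, not_false_eq_true]
    norm_num [Real.exp_pos]

/-- For large γ, theta3R is positive. -/
lemma theta3R_lower {c : ℝ} (hc : 2 ≤ c) (z : ℝ) : 0 < theta3R z c := by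
  have hc0 : 0 < c := by linarith
  set t : ℤ → ℝ := fun n => Real.exp (-c * (n:ℝ)^2) * Real.cos (2 * (n:ℝ) * z) with ht
  have hts : Summable t := summable_theta_term hc0 z
  set q : ℝ := Real.exp (-c) with hqdef
  have hq0 : 0 < q := Real.exp_pos _
  have hq4 : q ≤ 1/4 := by
    have h1 : Real.exp (-c) ≤ Real.exp (-2) := Real.exp_le_exp.2 (by linarith)
    have h2 : Real.exp (-2 : ℝ) < 1/4 := by
      rw [Real.exp_neg]
      have h3 : (2.7:ℝ) < Real.exp 1 := by
        have := Real.exp_one_gt_d9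
        linarith
      have h4 : (4:ℝ) < Real.exp 2 := by
        rw [show (2:ℝ) = 1 + 1 by norm_num, Real.exp_add]
        nlinarith
      rw [show (1:ℝ)/4 = (4:ℝ)⁻¹ by norm_num]
      exact inv_strictAnti₀ (by norm_num) h4
    linarith
  have hq1 : q < 1 := by linarith
  set g : ℕ → ℝ := fun n => t n + t (-(n:ℤ)) with hgdef
  have hinj1 : Function.Injective (fun n : ℕ => (n : ℤ)) := by
    intro a b h
    have h' : (a : ℤ) = b := h
    exact_mod_cast h'
  have hinj2 : Function.Injective (fun n : ℕ => -(n : ℤ)) := by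
    intro a b h
    have h' : -(a : ℤ) = -(b:ℤ) := h
    omega
  have hgs : Summable g := (hts.comp_injective hinj1).add (hts.comp_injective hinj2)
  have hsum_eq : ∑' n : ℕ, g n = theta3R z c + t 0 := tsum_nat_add_neg hts
  have ht0 : t 0 = 1 := by simp [ht]
  have hsplit : ∑' n : ℕ, g n = g 0 + ∑' n : ℕ, g (n+1) := Summable.tsum_eq_zero_add hgs
  have hg0 : g 0 = 2 := by
    show t 0 + t (-(0:ℤ)) = 2
    rw [neg_zero, ht0]
    norm_num
  have hb : ∀ n : ℕ, |g (n+1)| ≤ 2 * q * q ^ n := by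
    intro n
    have hbase : ∀ m : ℤ, m.natAbs = n + 1 → |t m| ≤ q * q^n := by
      intro m hm
      have h1 : |t m| ≤ Real.exp (-c * (m:ℝ)^2) := abs_theta_term_le c (m:ℝ) (2 * (m:ℝ) * z)
      have h3 : (m:ℝ)^2 = ((n:ℝ)+1)^2 := by
        rcases Int.natAbs_eq m with h | h <;> rw [h, hm] <;> push_cast <;> ring
      have h4 : Real.exp (-c * (m:ℝ)^2) ≤ Real.exp (-c * ((n:ℝ)+1)) := by
        apply Real.exp_le_exp.2
        rw [h3]
        nlinarith [mul_nonneg hc0.le (mul_nonneg (by positivity : (0:ℝ) ≤ (n:ℝ)+1)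
          (Nat.cast_nonneg (α := ℝ) n))]
      have h5 : Real.exp (-c * ((n:ℝ)+1)) = q * q^n := by
        rw [hqdef, ← Real.exp_nat_mul, ← Real.exp_add]
        congr 1
        ring
      linarith
    have e1 := hbase ((n:ℤ)+1) (by omega)
    have e2 := hbase (-((n:ℤ)+1)) (by omega)
    have hgeq : g (n+1) = t ((n:ℤ)+1) + t (-((n:ℤ)+1)) := by
      show t ((n+1 : ℕ) : ℤ) + t (-((n+1 : ℕ) : ℤ)) = _
      push_cast
      rfl
    calc |g (n+1)| ≤ |t ((n:ℤ)+1)| + |t (-((n:ℤ)+1))| := by rw [hgeq]; exact abs_add_le _ _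
      _ ≤ 2 * q * q^n := by linarith
  have hgeo : Summable fun n : ℕ => 2 * q * q ^ n :=
    (summable_geometric_of_lt_one hq0.le hq1).mul_left _
  have htail_abs : Summable fun n : ℕ => ‖g (n+1)‖ := by
    refine Summable.of_nonneg_of_le (fun n => norm_nonneg _) (fun n => ?_) hgeo
    rw [Real.norm_eq_abs]; exact hb n
  have htail_bound : |∑' n : ℕ, g (n+1)| ≤ 2 * q * (1-q)⁻¹ := by
    calc |∑' n : ℕ, g (n+1)| ≤ ∑' n : ℕ, ‖g (n+1)‖ := by
          rw [← Real.norm_eq_abs]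
          exact norm_tsum_le_tsum_norm htail_abs
      _ ≤ ∑' n : ℕ, 2 * q * q ^ n := by
          apply Summable.tsum_le_tsum _ htail_abs hgeo
          intro n
          rw [Real.norm_eq_abs]; exact hb n
      _ = 2 * q * (1-q)⁻¹ := by
          rw [tsum_mul_left, tsum_geometric_of_lt_one hq0.le hq1]
  have hfrac : 2 * q * (1-q)⁻¹ ≤ 2/3 := by
    rw [mul_inv_le_iff₀ (by linarith)]
    nlinarith
  have hth : theta3R z c = 1 + ∑' n : ℕ, g (n+1) := by
    rw [hsplit, hg0, ht0] at hsum_eq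
    linarith
  rw [hth]
  have := abs_le.1 htail_bound
  linarith [this.1]

lemma theta3R_nonneg {γ : ℝ} (hγ : 0 < γ) (z : ℝ) : 0 ≤ theta3R z γ := by
  have hid := theta_mul hγ z 0
  rw [add_zero, sub_zero] at hid
  by_contra hneg
  push_neg at hneg
  have h0 := theta3R_zero_pos hγ
  nlinarith [mul_self_nonneg (theta3R z (2*γ)), mul_self_nonneg (Oth γ z)]

lemma theta3R_pos {γ : ℝ} (hγ : 0 < γ) (z : ℝ) : 0 < theta3R z γ := by
  rcases lt_or_ge 0 (theta3R z γ) with h | h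
  · exact h
  have h0 : theta3R z γ = 0 := le_antisymm h (theta3R_nonneg hγ z)
  exfalso
  have key : ∀ k : ℕ, theta3R z (2^k * γ) = 0 := by
    intro k
    induction k with
    | zero => simpa using h0
    | succ n ih =>
      have hpos : (0:ℝ) < 2^n * γ := by positivity
      have hid := theta_mul hpos z 0
      rw [add_zero, sub_zero, ih, zero_mul] at hid
      have hB := mul_self_nonneg (Oth (2^n*γ) z)
      have hA := mul_self_nonneg (theta3R z (2*(2^n*γ)))
      have hA0 : theta3R z (2*(2^n*γ)) * theta3R z (2*(2^n*γ)) = 0 := by linarith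
      have hz := mul_self_eq_zero.1 hA0
      rw [show 2*(2^n*γ) = 2^(n+1) * γ by ring] at hz
      exact hz
  obtain ⟨k, hk⟩ := pow_unbounded_of_one_lt (R := ℝ) (2/γ) one_lt_two
  have h2 : 2 ≤ 2^k * γ := by
    rw [div_lt_iff₀ hγ] at hk
    linarith
  exact absurd (key k) (ne_of_gt (theta3R_lower h2 z))

/-- The key inequality θ₃(w+π/2)θ₃(π/2) ≤ θ₃(w)θ₃(0). -/
lemma theta_key {γ : ℝ} (hγ : 0 < γ) (w : ℝ) :
    theta3R (w + π/2) γ * theta3R (π/2) γ ≤ theta3R w γ * theta3R 0 γ := by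
  have h1 := theta_mul hγ w 0
  rw [add_zero, sub_zero] at h1
  have h2 := theta_mul hγ (w + π/2) (π/2)
  have e1 : w + π/2 + π/2 = w + π := by ring
  have e2 : w + π/2 - π/2 = w := by ring
  rw [e1, e2, theta3R_pi, Oth_pi] at h2
  nlinarith [mul_self_nonneg (Oth γ w)]

end ThetaQMF

open ThetaQMF in
theorem M0_QMF_condition (α : ℝ) (hα : 0 < α) (p : ℝ) :
    (Real.sqrt (theta3R (π * p) (α/8) / (2 * theta3R (2 * π * p) (α/2)) +
        (1 - theta3R 0 (α/8) / (2 * theta3R 0 (α/2))) * Real.cos (2 * π * p)))^2 +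
      (Real.sqrt (theta3R (π * (p + 1/2)) (α/8) / (2 * theta3R (2 * π * (p + 1/2)) (α/2)) +
        (1 - theta3R 0 (α/8) / (2 * theta3R 0 (α/2))) * Real.cos (2 * π * (p + 1/2))))^2 = 1 := by
  have hγ : 0 < α/8 := by positivity
  have harg1 : π * (p + 1/2) = π * p + π/2 := by ring
  have harg2 : 2 * π * (p + 1/2) = 2 * π * p + π := by ring
  have harg3 : α/2 = 4 * (α/8) := by ring
  have harg4 : 2 * π * p = 2 * (π * p) := by ring
  rw [harg1, harg2, harg3, harg4, theta3R_pi]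
  set γ := α/8
  set A := theta3R (π * p) γ with hA
  set A' := theta3R (π * p + π/2) γ with hA'
  set B := theta3R (2 * (π * p)) (4*γ) with hB
  set T0 := theta3R 0 γ with hT0
  set P := theta3R (π/2) γ with hP
  set B0 := theta3R 0 (4*γ) with hB0
  set c := Real.cos (2 * (π * p)) with hc
  have hcos' : Real.cos (2 * (π * p) + π) = -c := by rw [Real.cos_add_pi]
  rw [hcos']
  have hApos : 0 < A := theta3R_pos hγ _
  have hA'pos : 0 < A' := theta3R_pos hγ _
  have hT0pos : 0 < T0 := theta3R_pos hγ _
  have hPpos : 0 < P := theta3R_pos hγ _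
  have h2B : A + A' = 2 * B := theta3R_half hγ (π * p)
  have h2B0 : T0 + P = 2 * B0 := by
    have hh := theta3R_half hγ 0
    rw [zero_add, mul_zero] at hh
    exact hh
  have hBpos : 0 < B := by linarith
  have hB0pos : 0 < B0 := by linarith
  have hk1 : A' * P ≤ A * T0 := theta_key hγ (π * p)
  have hk2 : A * P ≤ A' * T0 := by
    have hh := theta_key hγ (π * p + π/2)
    rw [show π * p + π/2 + π/2 = π * p + π by ring, theta3R_pi] at hh
    exact hh
  have hc1 : -1 ≤ c := Real.neg_one_le_cos _
  have hc2 : c ≤ 1 := Real.cos_le_one _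
  have hsum : 0 < A + A' := by linarith
  have hTP : 0 < T0 + P := by linarith
  have hden : 0 < (A + A') * (T0 + P) := mul_pos hsum hTP
  have hrw1 : A / (2*B) + (1 - T0/(2*B0)) * c
      = (A * (T0 + P) + P * c * (A + A')) / ((A + A') * (T0 + P)) := by
    rw [← h2B, ← h2B0]
    field_simp
    try ring
  have hrw2 : A' / (2*B) + (1 - T0/(2*B0)) * (-c)
      = (A' * (T0 + P) - P * c * (A + A')) / ((A + A') * (T0 + P)) := by
    rw [← h2B, ← h2B0]
    field_simp
    try ring
  have hnum1 : 0 ≤ A * (T0 + P) + P * c * (A + A') := by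
    nlinarith [mul_nonneg (mul_nonneg hPpos.le (by linarith : (0:ℝ) ≤ c + 1)) hsum.le]
  have hnum2 : 0 ≤ A' * (T0 + P) - P * c * (A + A') := by
    nlinarith [mul_nonneg (mul_nonneg hPpos.le (by linarith : (0:ℝ) ≤ 1 - c)) hsum.le]
  have harg1pos : 0 ≤ A / (2*B) + (1 - T0/(2*B0)) * c := by
    rw [hrw1]; exact div_nonneg hnum1 hden.le
  have harg2pos : 0 ≤ A' / (2*B) + (1 - T0/(2*B0)) * (-c) := by
    rw [hrw2]; exact div_nonneg hnum2 hden.le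
  rw [Real.sq_sqrt harg1pos, Real.sq_sqrt harg2pos, hrw1, hrw2, ← add_div,
    div_eq_one_iff_eq (ne_of_gt hden)]
  ring
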